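/- Purity of the compatibility complex of arcs on a cycle (simplicial cyclohedron): fix an integer k ≥ 2. Call a subset S of ℤ/kℤ an arc if S is nonempty, proper, and is a cyclic interval {i, i+1, …, j} (indices mod k). Call two arcs S and T compatible if either they are nested (S ⊆ T or T ⊆ S) or they are spaced, meaning (S ∪ (S+1) ∪ (S−1)) ∩ T = ∅ (where S+1 and S−1 denote cyclic shifts). Then every family of pairwise compatible arcs that is maximal under inclusion has exactly k − 1 elements. -/

import Mathlib

/-- A subset of `ZMod k` is an arc if it is nonempty, proper, and a cyclic
interval `{i, i+1, …, j}`. -/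
def IsArc (k : ℕ) (S : Set (ZMod k)) : Prop :=
  S.Nonempty ∧ S ≠ Set.univ ∧
    ∃ (i : ZMod k) (t : ℕ), S = {x | ∃ m : ℕ, m ≤ t ∧ x = i + (m : ZMod k)}

/-- Two arcs are compatible if they are nested or spaced. -/
def ArcCompatible (k : ℕ) (S T : Set (ZMod k)) : Prop :=
  S ⊆ T ∨ T ⊆ S ∨
    (S ∪ ((· + 1) '' S) ∪ ((· + (-1)) '' S)) ∩ T = ∅

/-- A maximal (under inclusion) family of pairwise compatible arcs. -/
def MaxCompatFamily (k : ℕ) (J : Set (Set (ZMod k))) : Prop :=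
  (∀ S ∈ J, IsArc k S) ∧ (∀ S ∈ J, ∀ T ∈ J, ArcCompatible k S T) ∧
    ∀ J' : Set (Set (ZMod k)), (∀ S ∈ J', IsArc k S) →
      (∀ S ∈ J', ∀ T ∈ J', ArcCompatible k S T) → J ⊆ J' → J' = J

theorem Set.Finite.exists_maximal_wrt {α β : Type*} [PartialOrder β] (f : α → β) (s : Set α)
    (h : s.Finite) (hs : s.Nonempty) : ∃ a ∈ s, ∀ a' ∈ s, f a ≤ f a' → f a = f a' := by
  obtain ⟨a, ha, hmax⟩ := h.exists_maximalFor f s hs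
  exact ⟨a, ha, fun a' ha' hle => le_antisymm hle (hmax ha' hle)⟩

theorem Set.Finite.exists_minimal_wrt {α β : Type*} [PartialOrder β] (f : α → β) (s : Set α)
    (h : s.Finite) (hs : s.Nonempty) : ∃ a ∈ s, ∀ a' ∈ s, f a' ≤ f a → f a = f a' := by
  obtain ⟨a, ha, hmin⟩ := h.exists_minimalFor f s hs
  exact ⟨a, ha, fun a' ha' hle => le_antisymm (hmin ha' hle) hle⟩

namespace CycPurity

/-! ### Path-world: intervals on a segment -/

/-- `p` is an interval within the window `[a,b]`. -/
def PIn (a b : ℕ) (p : ℕ × ℕ) : Prop := a ≤ p.1 ∧ p.1 ≤ p.2 ∧ p.2 ≤ b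

/-- Nested or spaced, for path intervals. -/
def PCompat (p q : ℕ × ℕ) : Prop :=
  (q.1 ≤ p.1 ∧ p.2 ≤ q.2) ∨ (p.1 ≤ q.1 ∧ q.2 ≤ p.2) ∨ p.2 + 2 ≤ q.1 ∨ q.2 + 2 ≤ p.1

/-- Maximal pairwise-compatible family of intervals in the window `[a,b]`. -/
def PMax (a b : ℕ) (W : Set (ℕ × ℕ)) : Prop :=
  (∀ p ∈ W, PIn a b p) ∧ (∀ p ∈ W, ∀ q ∈ W, PCompat p q) ∧
  ∀ q, PIn a b q → (∀ p ∈ W, PCompat p q) → q ∈ W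

lemma pcompat_symm {p q : ℕ × ℕ} (h : PCompat p q) : PCompat q p := by
  rcases h with h | h | h | h
  · exact Or.inr (Or.inl h)
  · exact Or.inl h
  · exact Or.inr (Or.inr (Or.inr h))
  · exact Or.inr (Or.inr (Or.inl h))

lemma pmax_finite {a b : ℕ} {W : Set (ℕ × ℕ)} (h : PMax a b W) : W.Finite := by
  apply Set.Finite.subset (Set.finite_Iic ((b, b) : ℕ × ℕ))
  intro p hp
  obtain ⟨h1, h2, h3⟩ := h.1 p hp
  exact ⟨by omega, by omega⟩

/-- Purity for maximal compatible families of intervals on a segment. -/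
theorem pathLemma : ∀ N a b (W : Set (ℕ × ℕ)), b - a ≤ N → a ≤ b → PMax a b W →
    W.ncard = b - a + 1 := by
  intro N
  induction N with
  | zero =>
    intro a b W hN hab hW
    obtain ⟨hIn, hComp, hMaxi⟩ := hW
    have hab' : a = b := by omega
    subst hab'
    have hone : ∀ p ∈ W, p = (a, a) := by
      intro p hp
      obtain ⟨h1, h2, h3⟩ := hIn p hp
      exact Prod.ext_iff.mpr ⟨by omega, by omega⟩
    have hmem : (a, a) ∈ W := by
      apply hMaxi (a, a) ⟨le_rfl, le_rfl, le_rfl⟩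
      intro p hp
      rw [hone p hp]
      exact Or.inl ⟨le_rfl, le_rfl⟩
    have : W = {(a, a)} := Set.eq_singleton_iff_unique_mem.mpr ⟨hmem, hone⟩
    rw [this, Set.ncard_singleton]
    omega
  | succ N IH =>
    intro a b W hN hab hW
    obtain ⟨hIn, hComp, hMaxi⟩ := hW
    have hfin : W.Finite := pmax_finite ⟨hIn, hComp, hMaxi⟩
    by_cases hab' : a = b
    · -- same singleton argument
      subst hab'
      have hone : ∀ p ∈ W, p = (a, a) := by
        intro p hp
        obtain ⟨h1, h2, h3⟩ := hIn p hp
        exact Prod.ext_iff.mpr ⟨by omega, by omega⟩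
      have hmem : (a, a) ∈ W := by
        apply hMaxi (a, a) ⟨le_rfl, le_rfl, le_rfl⟩
        intro p hp
        rw [hone p hp]
        exact Or.inl ⟨le_rfl, le_rfl⟩
      have : W = {(a, a)} := Set.eq_singleton_iff_unique_mem.mpr ⟨hmem, hone⟩
      rw [this, Set.ncard_singleton]
      omega
    have hlt : a < b := by omega
    -- the full interval is a member
    have hfull : (a, b) ∈ W := by
      apply hMaxi (a, b) ⟨le_rfl, by omega, le_rfl⟩
      intro p hp
      exact Or.inl ⟨(hIn p hp).1, (hIn p hp).2.2⟩
    set P := W \ {(a, b)} with hPdef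
    have hPmem : ∀ p, p ∈ P ↔ p ∈ W ∧ p ≠ (a, b) := by
      intro p; simp [hPdef]
    have hPfin : P.Finite := hfin.subset (Set.diff_subset)
    -- P is nonempty
    have hPne : P.Nonempty := by
      by_contra hemp
      rw [Set.not_nonempty_iff_eq_empty] at hemp
      have hWsub : ∀ p ∈ W, p = (a, b) := by
        intro p hp
        by_contra hne
        have : p ∈ P := (hPmem p).mpr ⟨hp, hne⟩
        rw [hemp] at this
        exact this
      have haa : (a, a) ∈ W := by
        apply hMaxi (a, a) ⟨le_rfl, le_rfl, by omega⟩
        intro p hp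
        rw [hWsub p hp]
        exact Or.inr (Or.inl ⟨by omega, by omega⟩)
      have := hWsub _ haa
      rw [Prod.ext_iff] at this
      omega
    -- maximal elements of P
    set MaxP := {p ∈ P | ∀ q ∈ P, (q.1 ≤ p.1 ∧ p.2 ≤ q.2) → q = p} with hMaxPdef
    have habove : ∀ u ∈ P, ∃ m ∈ MaxP, m.1 ≤ u.1 ∧ u.2 ≤ m.2 := by
      intro u hu
      set PU := {q ∈ P | q.1 ≤ u.1 ∧ u.2 ≤ q.2} with hPUdef
      have hPUfin : PU.Finite := hPfin.subset (fun q hq => hq.1)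
      have hPUne : PU.Nonempty := ⟨u, hu, le_rfl, le_rfl⟩
      obtain ⟨m, hm, hmmax⟩ := hPUfin.exists_maximal_wrt (fun p => p.2 - p.1) PU hPUne
      refine ⟨m, ⟨hm.1, ?_⟩, hm.2.1, hm.2.2⟩
      intro q hq hcont
      have hqPU : q ∈ PU := ⟨hq, le_trans hcont.1 hm.2.1, le_trans hm.2.2 hcont.2⟩
      have hmin : m.1 ≤ m.2 := (hIn m hm.1.1).2.1
      have hsz := hmmax q hqPU (by omega)
      have : q.1 = m.1 ∧ q.2 = m.2 := by omega
      exact Prod.ext_iff.mpr this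
    have hMaxPsub : MaxP ⊆ P := fun m hm => hm.1
    have hMaxPfin : MaxP.Finite := hPfin.subset hMaxPsub
    have hMaxPne : MaxP.Nonempty := by
      obtain ⟨u, hu⟩ := hPne
      obtain ⟨m, hm, -⟩ := habove u hu
      exact ⟨m, hm⟩
    -- leftmost maximal element
    obtain ⟨M₁, hM₁, hM₁min⟩ := hMaxPfin.exists_minimal_wrt (fun p => p.1) MaxP hMaxPne
    have hM₁P : M₁ ∈ P := hM₁.1
    have hM₁W : M₁ ∈ W := hM₁P.1
    obtain ⟨hM₁In1, hM₁In2, hM₁In3⟩ := hIn M₁ hM₁W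
    have hM₁ne : M₁ ≠ (a, b) := ((hPmem M₁).mp hM₁P).2
    have hM₁max : ∀ q ∈ P, (q.1 ≤ M₁.1 ∧ M₁.2 ≤ q.2) → q = M₁ := hM₁.2
    have horder : ∀ m ∈ MaxP, m ≠ M₁ → M₁.2 + 2 ≤ m.1 := by
      intro m hm hne
      have hmP : m ∈ P := hMaxPsub hm
      rcases hComp m hmP.1 M₁ hM₁W with h | h | h | h
      · exact (hne (hm.2 M₁ hM₁P h).symm).elim
      · exact (hne (hM₁max m hmP h)).elim
      · exfalso
        obtain ⟨hm1, hm2, hm3⟩ := hIn m hmP.1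
        have h5 : M₁.1 = m.1 := hM₁min m hm (show m.1 ≤ M₁.1 by omega)
        omega
      · exact h
    by_cases hsingle : ∀ m ∈ MaxP, m = M₁
    · -- exactly one maximal element
      have hallin : ∀ u ∈ P, M₁.1 ≤ u.1 ∧ u.2 ≤ M₁.2 := by
        intro u hu
        obtain ⟨m, hm, h1, h2⟩ := habove u hu
        rw [hsingle m hm] at h1 h2
        exact ⟨h1, h2⟩
      -- M₁ is (a, b-1) or (a+1, b)
      have hM₁shape : (M₁.1 = a ∧ M₁.2 = b - 1) ∨ (M₁.1 = a + 1 ∧ M₁.2 = b) := by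
        have hcompatA : ∀ (A : ℕ × ℕ), A.1 ≤ M₁.1 → M₁.2 ≤ A.2 → A.2 ≤ b → a ≤ A.1 →
            (∀ p ∈ W, PCompat p A) := by
          intro A hA1 hA2 hA3 hA4 p hp
          by_cases hpf : p = (a, b)
          · subst hpf
            exact Or.inr (Or.inl ⟨hA4, hA3⟩)
          · have hpP : p ∈ P := (hPmem p).mpr ⟨hp, hpf⟩
            obtain ⟨h1, h2⟩ := hallin p hpP
            exact Or.inl ⟨by omega, by omega⟩
        have hnotboth : ¬(a < M₁.1 ∧ M₁.2 < b) := by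
          rintro ⟨h1, h2⟩
          have hA : (M₁.1, M₁.2 + 1) ∈ W := by
            apply hMaxi _ ⟨by omega, by omega, by omega⟩
            exact hcompatA _ le_rfl (by omega) (by omega) (by omega)
          have hAP : (M₁.1, M₁.2 + 1) ∈ P := (hPmem _).mpr ⟨hA, by
            intro hc; rw [Prod.ext_iff] at hc; omega⟩
          have := hM₁max _ hAP ⟨le_rfl, by omega⟩
          rw [Prod.ext_iff] at this
          omega
        by_cases h1 : M₁.1 = a
        · left
          refine ⟨h1, ?_⟩
          have hne2 : M₁.2 ≠ b := by
            intro h2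
            exact hM₁ne (Prod.ext_iff.mpr ⟨h1, h2⟩)
          by_contra hne'
          have h2 : M₁.2 + 1 < b := by omega
          have hA : (M₁.1, M₁.2 + 1) ∈ W := by
            apply hMaxi _ ⟨by omega, by omega, by omega⟩
            exact hcompatA _ le_rfl (by omega) (by omega) (by omega)
          have hAP : (M₁.1, M₁.2 + 1) ∈ P := (hPmem _).mpr ⟨hA, by
            intro hc; rw [Prod.ext_iff] at hc; omega⟩
          have := hM₁max _ hAP ⟨le_rfl, by omega⟩
          rw [Prod.ext_iff] at this
          omega
        · right
          have h1' : a < M₁.1 := by omega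
          have h2 : M₁.2 = b := by omega
          refine ⟨?_, h2⟩
          by_contra hne'
          have h3 : a + 1 < M₁.1 := by omega
          have hA : (M₁.1 - 1, b) ∈ W := by
            apply hMaxi _ ⟨by omega, by omega, le_rfl⟩
            exact hcompatA _ (by omega) (by omega) le_rfl (by omega)
          have hAP : (M₁.1 - 1, b) ∈ P := (hPmem _).mpr ⟨hA, by
            intro hc; rw [Prod.ext_iff] at hc; omega⟩
          have := hM₁max _ hAP ⟨by omega, by omega⟩
          rw [Prod.ext_iff] at this
          omega
      -- P is a maximal family on the window M₁
      have hPmax : PMax M₁.1 M₁.2 P := by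
        refine ⟨fun p hp => ⟨(hallin p hp).1, (hIn p hp.1).2.1, (hallin p hp).2⟩,
          fun p hp q hq => hComp p hp.1 q hq.1, ?_⟩
        intro q hqIn hqComp
        obtain ⟨hq1, hq2, hq3⟩ := hqIn
        have hqW : q ∈ W := by
          apply hMaxi q ⟨by omega, hq2, by omega⟩
          intro p hp
          by_cases hpf : p = (a, b)
          · subst hpf
            exact Or.inr (Or.inl ⟨by omega, by omega⟩)
          · exact hqComp p ((hPmem p).mpr ⟨hp, hpf⟩)
        refine (hPmem q).mpr ⟨hqW, ?_⟩
        intro hc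
        rw [Prod.ext_iff] at hc
        rcases hM₁shape with ⟨s1, s2⟩ | ⟨s1, s2⟩
        · omega
        · omega
      have hPcard : P.ncard = M₁.2 - M₁.1 + 1 := by
        apply IH M₁.1 M₁.2 P ?_ (by omega) hPmax
        rcases hM₁shape with ⟨s1, s2⟩ | ⟨s1, s2⟩ <;> omega
      have hWeq : W = insert (a, b) P := by
        rw [hPdef, Set.insert_diff_singleton, Set.insert_eq_of_mem hfull]
      rw [hWeq, Set.ncard_insert_of_notMem (by simp [hPdef]) hPfin, hPcard]
      rcases hM₁shape with ⟨s1, s2⟩ | ⟨s1, s2⟩ <;> omega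
    · -- at least two maximal elements
      push_neg at hsingle
      obtain ⟨m₀, hm₀, hm₀ne⟩ := hsingle
      set S₂ := {m ∈ MaxP | m ≠ M₁} with hS₂def
      have hS₂fin : S₂.Finite := hMaxPfin.subset (fun m hm => hm.1)
      obtain ⟨M₂, hM₂, hM₂min⟩ := hS₂fin.exists_minimal_wrt (fun p => p.1) S₂ ⟨m₀, hm₀, hm₀ne⟩
      have hM₂MaxP : M₂ ∈ MaxP := hM₂.1
      have hM₂ne : M₂ ≠ M₁ := hM₂.2
      have hM₂P : M₂ ∈ P := hMaxPsub hM₂MaxP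
      obtain ⟨hM₂In1, hM₂In2, hM₂In3⟩ := hIn M₂ hM₂P.1
      have hM₂max : ∀ q ∈ P, (q.1 ≤ M₂.1 ∧ M₂.2 ≤ q.2) → q = M₂ := hM₂MaxP.2
      have hord12 : M₁.2 + 2 ≤ M₂.1 := horder M₂ hM₂MaxP hM₂ne
      have horder2 : ∀ m ∈ MaxP, m ≠ M₁ → m ≠ M₂ → M₂.2 + 2 ≤ m.1 := by
        intro m hm hne1 hne2
        have hmP : m ∈ P := hMaxPsub hm
        rcases hComp m hmP.1 M₂ hM₂P.1 with h | h | h | h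
        · exact (hne2 (hm.2 M₂ hM₂P h).symm).elim
        · exact (hne2 (hM₂max m hmP h)).elim
        · exfalso
          obtain ⟨hm1, hm2, hm3⟩ := hIn m hmP.1
          have h5 : M₂.1 = m.1 := hM₂min m ⟨hm, hne1⟩ (show m.1 ≤ M₂.1 by omega)
          omega
        · exact h
      -- A = (M₁.1, M₂.2) is addable, hence must be the full interval
      have hA : (M₁.1, M₂.2) ∈ W := by
        apply hMaxi _ ⟨by omega, by omega, by omega⟩
        intro p hp
        by_cases hpf : p = (a, b)
        · subst hpf
          exact Or.inr (Or.inl ⟨by omega, by omega⟩)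
        · have hpP : p ∈ P := (hPmem p).mpr ⟨hp, hpf⟩
          obtain ⟨m, hm, h1, h2⟩ := habove p hpP
          by_cases hmm1 : m = M₁
          · subst hmm1
            exact Or.inl ⟨by omega, by omega⟩
          by_cases hmm2 : m = M₂
          · subst hmm2
            exact Or.inl ⟨by omega, by omega⟩
          · have := horder2 m hm hmm1 hmm2
            exact Or.inr (Or.inr (Or.inr (by omega)))
      have hAfull : M₁.1 = a ∧ M₂.2 = b := by
        by_contra hc
        have hne : (M₁.1, M₂.2) ≠ (a, b) := by
          intro h; rw [Prod.ext_iff] at h; exact hc ⟨h.1, h.2⟩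
        have hAP : (M₁.1, M₂.2) ∈ P := (hPmem _).mpr ⟨hA, hne⟩
        have := hM₁max _ hAP ⟨le_rfl, by omega⟩
        rw [Prod.ext_iff] at this
        omega
      -- no third maximal element
      have honly2 : ∀ m ∈ MaxP, m = M₁ ∨ m = M₂ := by
        intro m hm
        by_contra hc
        push_neg at hc
        have := horder2 m hm hc.1 hc.2
        obtain ⟨hm1, hm2, hm3⟩ := hIn m (hMaxPsub hm).1
        omega
      -- the gap is exactly 2
      have hgap : M₂.1 = M₁.2 + 2 := by
        by_contra hc
        have hgt : M₁.2 + 3 ≤ M₂.1 := by omega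
        have hA' : (a, M₁.2 + 1) ∈ W := by
          apply hMaxi _ ⟨le_rfl, by omega, by omega⟩
          intro p hp
          by_cases hpf : p = (a, b)
          · subst hpf
            exact Or.inr (Or.inl ⟨le_rfl, by omega⟩)
          · have hpP : p ∈ P := (hPmem p).mpr ⟨hp, hpf⟩
            obtain ⟨m, hm, h1, h2⟩ := habove p hpP
            rcases honly2 m hm with hmm | hmm
            · subst hmm
              exact Or.inl ⟨by omega, by omega⟩
            · subst hmm
              exact Or.inr (Or.inr (Or.inr (by omega)))
        have hAP : (a, M₁.2 + 1) ∈ P := (hPmem _).mpr ⟨hA', by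
          intro hc'; rw [Prod.ext_iff] at hc'; omega⟩
        have := hM₁max _ hAP ⟨by omega, by omega⟩
        rw [Prod.ext_iff] at this
        omega
      -- split P into the two blocks
      set W₁ := {u ∈ P | u.2 ≤ M₁.2} with hW₁def
      set W₂ := {u ∈ P | M₂.1 ≤ u.1} with hW₂def
      have hsplit : ∀ u ∈ P, (M₁.1 ≤ u.1 ∧ u.2 ≤ M₁.2) ∨ (M₂.1 ≤ u.1 ∧ u.2 ≤ M₂.2) := by
        intro u hu
        obtain ⟨m, hm, h1, h2⟩ := habove u hu
        rcases honly2 m hm with hmm | hmm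
        · subst hmm; exact Or.inl ⟨h1, h2⟩
        · subst hmm; exact Or.inr ⟨h1, h2⟩
      have hW₁In : ∀ u ∈ W₁, M₁.1 ≤ u.1 ∧ u.1 ≤ u.2 ∧ u.2 ≤ M₁.2 := by
        intro u hu
        obtain ⟨hu1, hu2, hu3⟩ := hIn u hu.1.1
        rcases hsplit u hu.1 with h | h
        · exact ⟨h.1, hu2, hu.2⟩
        · exfalso; have := hu.2; omega
      have hW₂In : ∀ u ∈ W₂, M₂.1 ≤ u.1 ∧ u.1 ≤ u.2 ∧ u.2 ≤ M₂.2 := by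
        intro u hu
        obtain ⟨hu1, hu2, hu3⟩ := hIn u hu.1.1
        rcases hsplit u hu.1 with h | h
        · exfalso; have := hu.2; omega
        · exact ⟨hu.2, hu2, h.2⟩
      have hW₁max : PMax M₁.1 M₁.2 W₁ := by
        refine ⟨hW₁In, fun p hp q hq => hComp p hp.1.1 q hq.1.1, ?_⟩
        intro q hqIn hqComp
        obtain ⟨hq1, hq2, hq3⟩ := hqIn
        have hqW : q ∈ W := by
          apply hMaxi q ⟨by omega, hq2, by omega⟩
          intro p hp
          by_cases hpf : p = (a, b)
          · subst hpf
            exact Or.inr (Or.inl ⟨by omega, by omega⟩)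
          · have hpP : p ∈ P := (hPmem p).mpr ⟨hp, hpf⟩
            rcases hsplit p hpP with h | h
            · exact hqComp p ⟨hpP, h.2⟩
            · exact Or.inr (Or.inr (Or.inr (by omega)))
        refine ⟨(hPmem q).mpr ⟨hqW, ?_⟩, hq3⟩
        intro hc; rw [Prod.ext_iff] at hc
        omega
      have hW₂max : PMax M₂.1 M₂.2 W₂ := by
        refine ⟨hW₂In, fun p hp q hq => hComp p hp.1.1 q hq.1.1, ?_⟩
        intro q hqIn hqComp
        obtain ⟨hq1, hq2, hq3⟩ := hqIn
        have hqW : q ∈ W := by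
          apply hMaxi q ⟨by omega, hq2, by omega⟩
          intro p hp
          by_cases hpf : p = (a, b)
          · subst hpf
            exact Or.inr (Or.inl ⟨by omega, by omega⟩)
          · have hpP : p ∈ P := (hPmem p).mpr ⟨hp, hpf⟩
            rcases hsplit p hpP with h | h
            · exact Or.inr (Or.inr (Or.inl (by omega)))
            · exact hqComp p ⟨hpP, h.1⟩
        refine ⟨(hPmem q).mpr ⟨hqW, ?_⟩, hq1⟩
        intro hc; rw [Prod.ext_iff] at hc
        omega
      have hW₁fin : W₁.Finite := hPfin.subset (fun u hu => hu.1)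
      have hW₂fin : W₂.Finite := hPfin.subset (fun u hu => hu.1)
      have hW₁card : W₁.ncard = M₁.2 - M₁.1 + 1 :=
        IH M₁.1 M₁.2 W₁ (by omega) (by omega) hW₁max
      have hW₂card : W₂.ncard = M₂.2 - M₂.1 + 1 :=
        IH M₂.1 M₂.2 W₂ (by omega) (by omega) hW₂max
      have hPeq : P = W₁ ∪ W₂ := by
        ext u
        constructor
        · intro hu
          rcases hsplit u hu with h | h
          · exact Or.inl ⟨hu, h.2⟩
          · exact Or.inr ⟨hu, h.1⟩
        · rintro (hu | hu) <;> exact hu.1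
      have hdisj : Disjoint W₁ W₂ := by
        rw [Set.disjoint_left]
        intro u hu1 hu2
        have h1 := hW₁In u hu1
        have h2 := hW₂In u hu2
        omega
      have hPcard : P.ncard = W₁.ncard + W₂.ncard := by
        rw [hPeq, Set.ncard_union_eq hdisj hW₁fin hW₂fin]
      have hWeq : W = insert (a, b) P := by
        rw [hPdef, Set.insert_diff_singleton, Set.insert_eq_of_mem hfull]
      rw [hWeq, Set.ncard_insert_of_notMem (by simp [hPdef]) hPfin, hPcard,
        hW₁card, hW₂card]
      omega

/-! ### Cycle-world: arcs in valuation normal form -/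

variable {k : ℕ}

/-- The arc starting at `i` with `t+1` elements, in valuation form. -/
def vset (k : ℕ) (i : ZMod k) (t : ℕ) : Set (ZMod k) := {x | (x - i).val ≤ t}

lemma mem_vset {i x : ZMod k} {t : ℕ} : x ∈ vset k i t ↔ (x - i).val ≤ t := Iff.rfl

lemma cast_val [NeZero k] (a : ZMod k) : ((a.val : ℕ) : ZMod k) = a := by
  rw [ZMod.natCast_val, ZMod.cast_id]

lemma val_cast_sub_cast [NeZero k] {p q : ℕ} (hp : p < k) (hq : q < k) :
    ((p : ZMod k) - (q : ZMod k)).val = if q ≤ p then p - q else p + k - q := by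
  split_ifs with h
  · have : (p : ZMod k) - (q : ZMod k) = ((p - q : ℕ) : ZMod k) := by
      rw [Nat.cast_sub (R := ZMod k) h]
    rw [this, ZMod.val_cast_of_lt (by omega)]
  · have : (p : ZMod k) - (q : ZMod k) = ((p + k - q : ℕ) : ZMod k) := by
      have h1 : (p + k - q : ℕ) = p + (k - q) := by omega
      rw [h1, Nat.cast_add, Nat.cast_sub (by omega), ZMod.natCast_self]
      ring
    rw [this, ZMod.val_cast_of_lt (by omega)]

lemma self_mem_vset [NeZero k] {i : ZMod k} {t : ℕ} : i ∈ vset k i t := by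
  simp [mem_vset]

/-- Spacedness relation, matching the third disjunct of `ArcCompatible`. -/
def Spaced (k : ℕ) (S T : Set (ZMod k)) : Prop :=
  (S ∪ ((· + 1) '' S) ∪ ((· + (-1)) '' S)) ∩ T = ∅

lemma arcCompatible_iff {S T : Set (ZMod k)} :
    ArcCompatible k S T ↔ S ⊆ T ∨ T ⊆ S ∨ Spaced k S T := Iff.rfl

lemma spaced_symm {S T : Set (ZMod k)} (h : Spaced k S T) : Spaced k T S := by
  rw [Spaced, Set.eq_empty_iff_forall_notMem] at h ⊢
  rintro x ⟨hx1, hx2⟩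
  rcases hx1 with (hx1 | hx1) | hx1
  · exact h x ⟨Or.inl (Or.inl hx2), hx1⟩
  · obtain ⟨y, hy, rfl⟩ := hx1
    refine h y ⟨Or.inr ⟨y + 1, hx2, by ring⟩, hy⟩
  · obtain ⟨y, hy, rfl⟩ := hx1
    refine h y ⟨Or.inl (Or.inr ⟨y + (-1), hx2, by ring⟩), hy⟩

lemma spaced_disjoint {S T : Set (ZMod k)} (h : Spaced k S T) : S ∩ T = ∅ := by
  rw [Spaced, Set.eq_empty_iff_forall_notMem] at h
  rw [Set.eq_empty_iff_forall_notMem]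
  rintro x ⟨hx1, hx2⟩
  exact h x ⟨Or.inl (Or.inl hx1), hx2⟩

lemma image_shift {i : ZMod k} {t : ℕ} (c : ZMod k) :
    (· + c) '' vset k i t = vset k (i + c) t := by
  ext x
  constructor
  · rintro ⟨y, hy, rfl⟩
    rw [mem_vset] at hy ⊢
    have : y + c - (i + c) = y - i := by ring
    rw [this]; exact hy
  · intro hx
    rw [mem_vset] at hx
    exact ⟨x - c, by rw [mem_vset]; have : x - c - i = x - (i + c) := by ring
                     rw [this]; exact hx, by ring⟩

lemma arc_iff (hk : 2 ≤ k) {S : Set (ZMod k)} :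
    IsArc k S ↔ ∃ (i : ZMod k) (t : ℕ), t ≤ k - 2 ∧ S = vset k i t := by
  haveI : NeZero k := ⟨by omega⟩
  have key : ∀ (i : ZMod k) (t : ℕ), t < k →
      {x : ZMod k | ∃ m : ℕ, m ≤ t ∧ x = i + (m : ZMod k)} = vset k i t := by
    intro i t htk
    ext x
    simp only [Set.mem_setOf_eq, mem_vset]
    constructor
    · rintro ⟨m, hm, rfl⟩
      have : i + (m : ZMod k) - i = (m : ZMod k) := by ring
      rw [this, ZMod.val_cast_of_lt (by omega)]; exact hm
    · intro hx
      exact ⟨(x - i).val, hx, by rw [cast_val]; ring⟩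
  constructor
  · rintro ⟨hne, hproper, i, t, hS⟩
    rcases Nat.lt_or_ge t (k - 1) with htk | htk
    · exact ⟨i, t, by omega, by rw [hS, key i t (by omega)]⟩
    · exfalso
      apply hproper
      rw [hS, Set.eq_univ_iff_forall]
      intro x
      exact ⟨(x - i).val, by have := ZMod.val_lt (x - i); omega,
        by rw [cast_val]; ring⟩
  · rintro ⟨i, t, ht, rfl⟩
    refine ⟨⟨i, self_mem_vset⟩, ?_, i, t, (key i t (by omega)).symm⟩
    intro huniv
    have : i - 1 ∈ vset k i t := by rw [huniv]; trivial
    rw [mem_vset] at this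
    have h1 : i - 1 - i = ((k - 1 : ℕ) : ZMod k) := by
      rw [Nat.cast_sub (by omega), ZMod.natCast_self, Nat.cast_one]; ring
    rw [h1, ZMod.val_cast_of_lt (by omega)] at this
    omega

lemma vset_inj (hk : 2 ≤ k) {i j : ZMod k} {t u : ℕ} (ht : t ≤ k - 2) (hu : u ≤ k - 2)
    (h : vset k i t = vset k j u) : i = j ∧ t = u := by
  haveI : NeZero k := ⟨by omega⟩
  have hij : i = j := by
    by_contra hne
    have hd1 : (j - i).val ≤ t := by
      have : j ∈ vset k i t := by rw [h]; exact self_mem_vset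
      exact this
    have hd2 : (i - j).val ≤ u := by
      have : i ∈ vset k j u := by rw [← h]; exact self_mem_vset
      exact this
    set d := (j - i).val with hd
    have hne' : j - i ≠ 0 := fun hc => hne (by linear_combination (norm := ring_nf) -hc)
    have hd0 : d ≠ 0 := by
      intro hc
      apply hne'
      have h0 := cast_val (j - i)
      rw [← hd, hc] at h0
      simpa using h0.symm
    have hiv : (i - j).val = k - d := by
      have : i - j = -(j - i) := by ring
      rw [this, ZMod.neg_val, if_neg hne']
    have hmem : i - 1 ∉ vset k i t := by
      rw [mem_vset]
      have h1 : i - 1 - i = ((k - 1 : ℕ) : ZMod k) := by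
        rw [Nat.cast_sub (by omega), ZMod.natCast_self, Nat.cast_one]; ring
      rw [h1, ZMod.val_cast_of_lt (by omega)]
      omega
    rw [h, mem_vset] at hmem
    push_neg at hmem
    have h2 : i - 1 - j = (((k - d) - 1 : ℕ) : ZMod k) := by
      have hc : ((k - d : ℕ) : ZMod k) = i - j := by rw [← hiv]; exact cast_val _
      have : (((k - d) - 1 : ℕ) : ZMod k) = ((k - d : ℕ) : ZMod k) - 1 := by
        rw [Nat.cast_sub (by omega), Nat.cast_one]
      rw [this, hc]; ring
    rw [h2, ZMod.val_cast_of_lt (by omega)] at hmem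
    omega
  subst hij
  have h1 : t ≤ u := by
    have : i + (t : ZMod k) ∈ vset k i u := by
      rw [← h, mem_vset]
      have : i + (t : ZMod k) - i = (t : ZMod k) := by ring
      rw [this, ZMod.val_cast_of_lt (by omega)]
    rw [mem_vset] at this
    have h2 : i + (t : ZMod k) - i = (t : ZMod k) := by ring
    rw [h2, ZMod.val_cast_of_lt (by omega)] at this
    omega
  have h2 : u ≤ t := by
    have : i + (u : ZMod k) ∈ vset k i t := by
      rw [h, mem_vset]
      have : i + (u : ZMod k) - i = (u : ZMod k) := by ring
      rw [this, ZMod.val_cast_of_lt (by omega)]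
    rw [mem_vset] at this
    have h2 : i + (u : ZMod k) - i = (u : ZMod k) := by ring
    rw [h2, ZMod.val_cast_of_lt (by omega)] at this
    omega
  exact ⟨rfl, by omega⟩

lemma subset_iff [NeZero k] {i j : ZMod k} {t u : ℕ} (ht : t < k) (hu : u + 1 < k) :
    vset k i t ⊆ vset k j u ↔ (i - j).val + t ≤ u := by
  constructor
  · intro hsub
    by_contra hlt
    push_neg at hlt
    set d := (i - j).val with hd
    have hdk : d < k := ZMod.val_lt _
    have hd0 : d ≤ u := by
      have := hsub (self_mem_vset (t := t))
      rw [mem_vset] at this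
      exact this
    set m : ℕ := u - d + 1 with hm
    have hmt : m ≤ t := by omega
    have hx : (i + (m : ZMod k)) ∈ vset k i t := by
      rw [mem_vset]
      have : i + (m : ZMod k) - i = (m : ZMod k) := by ring
      rw [this, ZMod.val_cast_of_lt (by omega)]
      exact hmt
    have := hsub hx
    rw [mem_vset] at this
    have hdc : ((d : ℕ) : ZMod k) = i - j := by rw [hd]; exact cast_val _
    have hrw : i + (m : ZMod k) - j = ((d + m : ℕ) : ZMod k) := by
      calc i + (m : ZMod k) - j = (i - j) + (m : ZMod k) := by ring
        _ = ((d : ℕ) : ZMod k) + (m : ZMod k) := by rw [hdc]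
        _ = ((d + m : ℕ) : ZMod k) := (Nat.cast_add d m).symm
    rw [hrw, ZMod.val_cast_of_lt (by omega)] at this
    omega
  · intro hle x hx
    rw [mem_vset] at hx ⊢
    have h1 : x - j = (x - i) + (i - j) := by ring
    rw [h1]
    calc ((x - i) + (i - j)).val ≤ (x - i).val + (i - j).val := ZMod.val_add_le _ _
      _ ≤ u := by omega

lemma disjoint_iff [NeZero k] {i j : ZMod k} {t u : ℕ} :
    vset k i t ∩ vset k j u = ∅ ↔ t < (j - i).val ∧ (j - i).val + u < k := by
  set e := (j - i).val with he
  have hek : e < k := ZMod.val_lt _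
  constructor
  · intro hdisj
    by_contra hc
    push_neg at hc
    rcases Nat.lt_or_ge t e with h1 | h1
    · have h2 : k ≤ e + u := hc h1
      have he0 : e ≠ 0 := by omega
      have hji : j - i ≠ 0 := by
        intro h; rw [he, h, ZMod.val_zero] at he0; exact he0 rfl
      have hiv : (i - j).val = k - e := by
        have : i - j = -(j - i) := by ring
        rw [this, ZMod.neg_val, if_neg hji]
      have : i ∈ vset k i t ∩ vset k j u := by
        constructor
        · exact self_mem_vset
        · rw [mem_vset, hiv]; omega
      rw [hdisj] at this; exact this
    · have : j ∈ vset k i t ∩ vset k j u := by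
        constructor
        · rw [mem_vset]; omega
        · exact self_mem_vset
      rw [hdisj] at this; exact this
  · rintro ⟨h1, h2⟩
    rw [Set.eq_empty_iff_forall_notMem]
    rintro x ⟨hx1, hx2⟩
    rw [mem_vset] at hx1 hx2
    set m := (x - j).val with hm
    have hrw : x - i = ((e + m : ℕ) : ZMod k) := by
      calc x - i = (j - i) + (x - j) := by ring
        _ = ((e : ℕ) : ZMod k) + ((m : ℕ) : ZMod k) := by
            rw [he, hm, cast_val, cast_val]
        _ = ((e + m : ℕ) : ZMod k) := (Nat.cast_add e m).symm
    rw [hrw, ZMod.val_cast_of_lt (by omega)] at hx1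
    omega

lemma union_shift_eq [NeZero k] {i : ZMod k} {t : ℕ} (h : t + 2 < k) :
    vset k i t ∪ ((· + 1) '' vset k i t) ∪ ((· + (-1)) '' vset k i t)
      = vset k (i - 1) (t + 2) := by
  rw [image_shift, image_shift]
  have hi1 : i + (-1) = i - 1 := by ring
  rw [hi1]
  ext x
  simp only [Set.mem_union, mem_vset]
  set w := (x - (i - 1)).val with hwdef
  have hw : w < k := ZMod.val_lt _
  have hcw : ((w : ℕ) : ZMod k) = x - (i - 1) := by rw [hwdef]; exact cast_val _
  have e1 : (x - i).val = if 1 ≤ w then w - 1 else w + k - 1 := by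
    have hx : x - i = ((w : ℕ) : ZMod k) - ((1 : ℕ) : ZMod k) := by
      rw [hcw]; push_cast; ring
    rw [hx, val_cast_sub_cast hw (by omega)]
  have e2 : (x - (i + 1)).val = if 2 ≤ w then w - 2 else w + k - 2 := by
    have hx : x - (i + 1) = ((w : ℕ) : ZMod k) - ((2 : ℕ) : ZMod k) := by
      rw [hcw]; push_cast; ring
    rw [hx, val_cast_sub_cast hw (by omega)]
  rw [e1, e2]
  split_ifs <;> omega

lemma not_spaced_of_big [NeZero k] {i j : ZMod k} {t u : ℕ} (hk2 : 2 ≤ k) (htk : t < k)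
    (h : k ≤ t + 2) : ¬ Spaced k (vset k i t) (vset k j u) := by
  intro hs
  rw [Spaced, image_shift, image_shift, Set.eq_empty_iff_forall_notMem] at hs
  apply hs j
  refine ⟨?_, self_mem_vset⟩
  simp only [Set.mem_union, mem_vset]
  have hi1 : i + (-1) = i - 1 := by ring
  rw [hi1]
  set w := (j - (i - 1)).val with hwdef
  have hw : w < k := ZMod.val_lt _
  have hcw : ((w : ℕ) : ZMod k) = j - (i - 1) := by rw [hwdef]; exact cast_val _
  have e1 : (j - i).val = if 1 ≤ w then w - 1 else w + k - 1 := by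
    have hx : j - i = ((w : ℕ) : ZMod k) - ((1 : ℕ) : ZMod k) := by
      rw [hcw]; push_cast; ring
    rw [hx, val_cast_sub_cast hw (by omega)]
  rw [e1]
  split_ifs <;> omega

lemma spaced_iff [NeZero k] {i j : ZMod k} {t u : ℕ} (hk2 : 2 ≤ k) (htk : t < k) :
    Spaced k (vset k i t) (vset k j u) ↔
      t + 2 < ((j - i) + 1).val ∧ ((j - i) + 1).val + u < k := by
  rcases Nat.lt_or_ge (t + 2) k with h | h
  · rw [Spaced, union_shift_eq h, disjoint_iff]
    have : j - (i - 1) = (j - i) + 1 := by ring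
    rw [this]
  · constructor
    · intro hs; exact absurd hs (not_spaced_of_big hk2 htk h)
    · rintro ⟨h1, h2⟩
      have := ZMod.val_lt ((j - i) + 1)
      omega

/-! ### Transfer between windows on the cycle and path intervals -/

lemma subset_window_iff [NeZero k] (hk2 : 2 ≤ k) {i : ZMod k} {p q : ℕ × ℕ}
    (hp1 : p.1 ≤ p.2) (hp2 : p.2 ≤ k - 2) (hq1 : q.1 ≤ q.2) (hq2 : q.2 ≤ k - 2) :
    vset k (i + (p.1 : ZMod k)) (p.2 - p.1) ⊆ vset k (i + (q.1 : ZMod k)) (q.2 - q.1) ↔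
      q.1 ≤ p.1 ∧ p.2 ≤ q.2 := by
  rw [subset_iff (by omega) (by omega)]
  have hd : (i + (p.1 : ZMod k)) - (i + (q.1 : ZMod k))
      = ((p.1 : ℕ) : ZMod k) - ((q.1 : ℕ) : ZMod k) := by ring
  rw [hd, val_cast_sub_cast (by omega) (by omega)]
  split_ifs with h <;> omega

lemma spaced_window_iff [NeZero k] (hk2 : 2 ≤ k) {i : ZMod k} {p q : ℕ × ℕ}
    (hp1 : p.1 ≤ p.2) (hp2 : p.2 ≤ k - 2) (hq1 : q.1 ≤ q.2) (hq2 : q.2 ≤ k - 2) :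
    Spaced k (vset k (i + (p.1 : ZMod k)) (p.2 - p.1))
      (vset k (i + (q.1 : ZMod k)) (q.2 - q.1)) ↔
      p.2 + 2 ≤ q.1 ∨ q.2 + 2 ≤ p.1 := by
  rw [spaced_iff hk2 (by omega)]
  have he : (i + (q.1 : ZMod k)) - (i + (p.1 : ZMod k)) + 1
      = ((q.1 + 1 : ℕ) : ZMod k) - ((p.1 : ℕ) : ZMod k) := by push_cast; ring
  rw [he, val_cast_sub_cast (by omega) (by omega)]
  split_ifs with h <;> omega

lemma compat_window_iff [NeZero k] (hk2 : 2 ≤ k) {i : ZMod k} {p q : ℕ × ℕ}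
    (hp1 : p.1 ≤ p.2) (hp2 : p.2 ≤ k - 2) (hq1 : q.1 ≤ q.2) (hq2 : q.2 ≤ k - 2) :
    ArcCompatible k (vset k (i + (p.1 : ZMod k)) (p.2 - p.1))
      (vset k (i + (q.1 : ZMod k)) (q.2 - q.1)) ↔ PCompat p q := by
  rw [ArcCompatible, PCompat,
    subset_window_iff hk2 hp1 hp2 hq1 hq2, subset_window_iff hk2 hq1 hq2 hp1 hp2]
  have : ((vset k (i + (p.1 : ZMod k)) (p.2 - p.1) ∪
      ((· + 1) '' vset k (i + (p.1 : ZMod k)) (p.2 - p.1)) ∪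
      ((· + (-1)) '' vset k (i + (p.1 : ZMod k)) (p.2 - p.1))) ∩
      vset k (i + (q.1 : ZMod k)) (q.2 - q.1) = ∅) ↔ (p.2 + 2 ≤ q.1 ∨ q.2 + 2 ≤ p.1) :=
    spaced_window_iff hk2 hp1 hp2 hq1 hq2
  rw [this]

end CycPurity

open CycPurity in
/-- Purity of the compatibility complex of arcs on a `k`-cycle: every maximal
family of pairwise compatible arcs has exactly `k - 1` elements. -/
theorem maxCompatFamily_card (k : ℕ) (hk : 2 ≤ k)
    (J : Set (Set (ZMod k))) (hJ : MaxCompatFamily k J) :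
    J.ncard = k - 1 := by
  haveI : NeZero k := ⟨by omega⟩
  obtain ⟨hArc, hCompat, hMaxi⟩ := hJ
  -- an arc compatible with every member of J is itself a member
  have hAdd : ∀ A : Set (ZMod k), IsArc k A →
      (∀ V ∈ J, ArcCompatible k A V ∧ ArcCompatible k V A) → A ∈ J := by
    intro A hA hcomp
    have heq := hMaxi (insert A J) ?_ ?_ (Set.subset_insert _ _)
    · rw [← heq]; exact Set.mem_insert _ _
    · intro S hS
      rcases Set.mem_insert_iff.mp hS with rfl | hS'
      · exact hA
      · exact hArc S hS'
    · intro S hS T hT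
      rcases Set.mem_insert_iff.mp hS with rfl | hS' <;>
        rcases Set.mem_insert_iff.mp hT with rfl | hT'
      · exact Or.inl (subset_refl _)
      · exact (hcomp T hT').1
      · exact (hcomp S hS').2
      · exact hCompat S hS' T hT'
  have hfin : J.Finite := Set.toFinite J
  have hne : J.Nonempty := by
    by_contra h
    rw [Set.not_nonempty_iff_eq_empty] at h
    have : vset k 0 0 ∈ J := by
      apply hAdd _ ((arc_iff hk).mpr ⟨0, 0, by omega, rfl⟩)
      intro V hV
      rw [h] at hV
      exact absurd hV (Set.notMem_empty V)
    rw [h] at this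
    exact absurd this (Set.notMem_empty _)
  obtain ⟨M, hMJ, hMmax'⟩ := hfin.exists_maximal_wrt id J hne
  have hMmax : ∀ V ∈ J, M ⊆ V → V = M := fun V hV hsub => (hMmax' V hV hsub).symm
  obtain ⟨i, t, ht, hMeq⟩ := (arc_iff hk).mp (hArc M hMJ)
  subst hMeq
  have hdich : ∀ V ∈ J, V ⊆ vset k i t ∨ Spaced k (vset k i t) V := by
    intro V hV
    rcases hCompat _ hMJ V hV with h | h | h
    · left; rw [hMmax V hV h]
    · left; exact h
    · right; exact h
  by_cases htop : t = k - 2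
  · -- the maximal member is a full-size arc; transfer to the path world
    subst htop
    have hsub : ∀ V ∈ J, V ⊆ vset k i (k - 2) := by
      intro V hV
      rcases hdich V hV with h | h
      · exact h
      · exfalso
        obtain ⟨j, u, hu, rfl⟩ := (arc_iff hk).mp (hArc V hV)
        rw [spaced_iff hk (by omega)] at h
        have := ZMod.val_lt ((j - i) + 1)
        omega
    set ψ : ℕ × ℕ → Set (ZMod k) := fun p => vset k (i + (p.1 : ZMod k)) (p.2 - p.1)
      with hψdef
    set W := {p : ℕ × ℕ | p.1 ≤ p.2 ∧ p.2 ≤ k - 2 ∧ ψ p ∈ J} with hWdef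
    have himg : J = ψ '' W := by
      ext V
      constructor
      · intro hV
        obtain ⟨j, u, hu, rfl⟩ := (arc_iff hk).mp (hArc V hV)
        have hsubM := hsub _ hV
        rw [subset_iff (by omega) (by omega)] at hsubM
        have hj : i + (((j - i).val : ℕ) : ZMod k) = j := by rw [cast_val]; ring
        refine ⟨((j - i).val, (j - i).val + u), ⟨by omega, by omega, ?_⟩, ?_⟩
        · show vset k (i + (((j - i).val : ℕ) : ZMod k)) ((j - i).val + u - (j - i).val) ∈ J
          rw [show (j - i).val + u - (j - i).val = u by omega, hj]
          exact hV
        · show vset k (i + (((j - i).val : ℕ) : ZMod k)) ((j - i).val + u - (j - i).val)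
            = vset k j u
          rw [show (j - i).val + u - (j - i).val = u by omega, hj]
      · rintro ⟨p, hp, rfl⟩
        exact hp.2.2
    have hinj : Set.InjOn ψ W := by
      intro p hp q hq h
      obtain ⟨hpa, hpb, -⟩ := hp
      obtain ⟨hqa, hqb, -⟩ := hq
      obtain ⟨heq1, heq2⟩ := vset_inj hk (by omega) (by omega) h
      have h1 : ((p.1 : ℕ) : ZMod k) = ((q.1 : ℕ) : ZMod k) := by
        exact add_left_cancel heq1
      have h2 : p.1 = q.1 := by
        have := congrArg ZMod.val h1
        rwa [ZMod.val_cast_of_lt (by omega), ZMod.val_cast_of_lt (by omega)] at this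
      exact Prod.ext_iff.mpr ⟨h2, by omega⟩
    have hWmax : PMax 0 (k - 2) W := by
      refine ⟨fun p hp => ⟨Nat.zero_le _, hp.1, hp.2.1⟩, ?_, ?_⟩
      · intro p hp q hq
        rw [← compat_window_iff hk hp.1 hp.2.1 hq.1 hq.2.1]
        exact hCompat _ hp.2.2 _ hq.2.2
      · intro q hqIn hqComp
        obtain ⟨hq0, hq1, hq2⟩ := hqIn
        refine ⟨hq1, hq2, ?_⟩
        apply hAdd
        · exact (arc_iff hk).mpr ⟨i + (q.1 : ZMod k), q.2 - q.1, by omega, rfl⟩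
        · intro V hV
          rw [himg] at hV
          obtain ⟨p, hp, rfl⟩ := hV
          constructor
          · rw [compat_window_iff hk hq1 hq2 hp.1 hp.2.1]
            exact pcompat_symm (hqComp p hp)
          · rw [compat_window_iff hk hp.1 hp.2.1 hq1 hq2]
            exact hqComp p hp
    rw [himg, Set.ncard_image_of_injOn hinj,
      pathLemma (k - 2) 0 (k - 2) W (by omega) (by omega) hWmax]
    omega
  · -- impossible: the maximal member could be enlarged
    exfalso
    have ht' : t < k - 2 := lt_of_le_of_ne ht htop
    have hMne : ∀ t', t < t' → t' ≤ k - 2 → vset k i t' ∉ J := by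
      intro t' h1 h2 hmem
      have hMsub : vset k i t ⊆ vset k i t' := by
        rw [subset_iff (by omega) (by omega)]
        simp only [sub_self, ZMod.val_zero]
        omega
      have := hMmax _ hmem hMsub
      obtain ⟨-, h⟩ := vset_inj hk h2 (by omega) this
      omega
    set j₀ : ZMod k := i + ((t + 2 : ℕ) : ZMod k) with hj₀
    have hval0 : (j₀ - i).val = t + 2 := by
      rw [hj₀]
      have h1 : i + ((t + 2 : ℕ) : ZMod k) - i = ((t + 2 : ℕ) : ZMod k) := by ring
      rw [h1, ZMod.val_cast_of_lt (by omega)]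
    by_cases hB : ∃ r, r ≤ k - 2 ∧ vset k j₀ r ∈ J
    · -- there is a member starting right after the gap; absorb the largest one
      set Bset := {r : ℕ | r ≤ k - 2 ∧ vset k j₀ r ∈ J} with hBdef
      have hBfin : Bset.Finite := Set.Finite.subset (Set.finite_Iic (k - 2))
        (fun r hr => hr.1)
      obtain ⟨r, hrB, hrmax⟩ := hBfin.exists_maximal_wrt id Bset hB
      obtain ⟨hrk, hTJ⟩ := hrB
      have hTsp : Spaced k (vset k i t) (vset k j₀ r) := by
        rcases hdich _ hTJ with h | h
        · exfalso
          rw [subset_iff (by omega) (by omega)] at h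
          omega
        · exact h
      have hsp' := (spaced_iff hk (show t < k by omega)).mp hTsp
      have heq0 : (j₀ - i) + 1 = ((t + 3 : ℕ) : ZMod k) := by
        rw [hj₀]; push_cast; ring
      rw [heq0, ZMod.val_natCast] at hsp'
      have ht3 : t + 3 < k := by
        rcases Nat.lt_or_ge (t + 3) k with h | h
        · exact h
        · exfalso
          have hk3 : t + 3 = k := by omega
          have : (t + 3) % k = 0 := by rw [hk3]; simp
          omega
      rw [Nat.mod_eq_of_lt ht3] at hsp'
      have hrbound : t + 3 + r < k := hsp'.2
      have hAJ : vset k i (t + 2 + r) ∈ J := by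
        apply hAdd _ ((arc_iff hk).mpr ⟨i, t + 2 + r, by omega, rfl⟩)
        intro V hV
        have key : V ⊆ vset k i (t + 2 + r) ∨ Spaced k (vset k i (t + 2 + r)) V := by
          rcases hdich V hV with h | h
          · left
            refine h.trans ?_
            rw [subset_iff (by omega) (by omega)]
            simp only [sub_self, ZMod.val_zero]
            omega
          · obtain ⟨j, u, hu, rfl⟩ := (arc_iff hk).mp (hArc V hV)
            have hspM := (spaced_iff hk (show t < k by omega)).mp h
            set e := ((j - i) + 1).val with hedef
            have hek : e < k := ZMod.val_lt _
            have hecast : ((e : ℕ) : ZMod k) = (j - i) + 1 := by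
              rw [hedef]; exact cast_val _
            by_cases het : e = t + 3
            · -- V starts at j₀, hence V ⊆ T* ⊆ A
              have hj : j = j₀ := by
                have h1 : (j - i) + 1 = ((t + 3 : ℕ) : ZMod k) := by
                  rw [← hecast, het]
                rw [hj₀]
                have h2 : ((t + 3 : ℕ) : ZMod k) = ((t + 2 : ℕ) : ZMod k) + 1 := by
                  push_cast; ring
                rw [h2] at h1
                linear_combination h1
              subst hj
              have huB : u ∈ Bset := ⟨hu, hV⟩
              have hur : u ≤ r := by
                by_contra hgt
                have := hrmax u huB (show r ≤ u by omega)
                simp only [id] at this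
                omega
              left
              rw [subset_iff (by omega) (by omega), hval0]
              omega
            · have he4 : t + 4 ≤ e := by omega
              rcases hCompat _ hV _ hTJ with hvt | hvt | hvt
              · -- V ⊆ T* ⊆ A
                left
                refine hvt.trans ?_
                rw [subset_iff (by omega) (by omega)]
                omega
              · -- T* ⊆ V : impossible
                exfalso
                rw [subset_iff (by omega) (by omega)] at hvt
                have hj0j : (j₀ - j).val = t + 3 + k - e := by
                  have hrw : j₀ - j = ((t + 3 : ℕ) : ZMod k) - ((e : ℕ) : ZMod k) := by
                    rw [hecast, hj₀]; push_cast; ring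
                  rw [hrw, val_cast_sub_cast (by omega) (by omega), if_neg (by omega)]
                omega
              · -- V and T* spaced, so e is large and A is spaced from V
                have hvt' := spaced_symm hvt
                have hsp2 := (spaced_iff hk (show r < k by omega)).mp hvt'
                have hrw : (j - j₀) + 1 = ((e : ℕ) : ZMod k) - ((t + 2 : ℕ) : ZMod k) := by
                  rw [hecast, hj₀]; push_cast; ring
                rw [hrw, val_cast_sub_cast hek (by omega), if_pos (by omega)] at hsp2
                right
                rw [spaced_iff hk (show t + 2 + r < k by omega)]
                constructor
                · omega
                · omega
        rcases key with h | h
        · exact ⟨Or.inr (Or.inl h), Or.inl h⟩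
        · exact ⟨Or.inr (Or.inr h), Or.inr (Or.inr (spaced_symm h))⟩
      exact hMne (t + 2 + r) (by omega) (by omega) hAJ
    · -- nothing starts right after the gap: extend M by one
      push_neg at hB
      have hAJ : vset k i (t + 1) ∈ J := by
        apply hAdd _ ((arc_iff hk).mpr ⟨i, t + 1, by omega, rfl⟩)
        intro V hV
        have key : V ⊆ vset k i (t + 1) ∨ Spaced k (vset k i (t + 1)) V := by
          rcases hdich V hV with h | h
          · left
            refine h.trans ?_
            rw [subset_iff (by omega) (by omega)]
            simp only [sub_self, ZMod.val_zero]
            omega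
          · obtain ⟨j, u, hu, rfl⟩ := (arc_iff hk).mp (hArc V hV)
            have hspM := (spaced_iff hk (show t < k by omega)).mp h
            set e := ((j - i) + 1).val with hedef
            have hek : e < k := ZMod.val_lt _
            have hecast : ((e : ℕ) : ZMod k) = (j - i) + 1 := by
              rw [hedef]; exact cast_val _
            have het : e ≠ t + 3 := by
              intro hc
              have hj : j = j₀ := by
                have h1 : (j - i) + 1 = ((t + 3 : ℕ) : ZMod k) := by
                  rw [← hecast, hc]
                rw [hj₀]
                have h2 : ((t + 3 : ℕ) : ZMod k) = ((t + 2 : ℕ) : ZMod k) + 1 := by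
                  push_cast; ring
                rw [h2] at h1
                linear_combination h1
              exact hB u hu (hj ▸ hV)
            right
            rw [spaced_iff hk (show t + 1 < k by omega)]
            exact ⟨by omega, by omega⟩
        rcases key with h | h
        · exact ⟨Or.inr (Or.inl h), Or.inl h⟩
        · exact ⟨Or.inr (Or.inr h), Or.inr (Or.inr (spaced_symm h))⟩
      exact hMne (t + 1) (by omega) (by omega) hAJ
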